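/- arXiv:2403.04680 — 5 statements merged into one kernel-verified Lean document; each statement's English description precedes it below -/
import Mathlib

section
/- Let T ⊂ R^{n+1} be a nonempty convex set contained in the hyperplane {x : ⟨x, a⟩ = 1}, and define f(x, ℓ) := ℓ − ⟨x, ℓ⟩·a. Suppose x_1, ..., x_T ∈ T and R_1, ..., R_T ∈ cone(T) satisfy ⟨R_t, f(x_t, ℓ)⟩ = 0 for all ℓ ∈ R^{n+1} and all t. Then for every x̂ ∈ T, the regret ∑_{t=1}^T ⟨x_t − x̂, ℓ_t⟩ equals ∑_{t=1}^T ⟨R_t − R̂, f(x_t, ℓ_t)⟩ where R̂ := x̂ ∈ cone(T). -/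
open scoped RealInnerProductSpace

/-- The conic hull `{α • x : x ∈ S, α ≥ 0}`. -/
def coneOf {E : Type*} [AddCommMonoid E] [Module ℝ E] (S : Set E) : Set E :=
  {y | ∃ α : ℝ, 0 ≤ α ∧ ∃ x ∈ S, y = α • x}

/-- Regret over `T` equals regret over `cone(T)` against the transformed losses
`f(x, ℓ) = ℓ - ⟨x, ℓ⟩ • a`, with comparator `R̂ = xhat`. -/
theorem treeplex_regret_eq_cone_regret {n : ℕ}
    (a : EuclideanSpace ℝ (Fin (n + 1))) (T : Set (EuclideanSpace ℝ (Fin (n + 1))))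
    (hne : T.Nonempty) (hconv : Convex ℝ T)
    (hT : ∀ x ∈ T, ⟪x, a⟫ = 1)
    (N : ℕ) (x R ℓ : Fin N → EuclideanSpace ℝ (Fin (n + 1)))
    (hx : ∀ t, x t ∈ T) (hR : ∀ t, R t ∈ coneOf T)
    (hforce : ∀ t, ∀ l : EuclideanSpace ℝ (Fin (n + 1)), ⟪R t, l - ⟪x t, l⟫ • a⟫ = 0)
    (xhat : EuclideanSpace ℝ (Fin (n + 1))) (hxhat : xhat ∈ T) :
    ∑ t, ⟪x t - xhat, ℓ t⟫ = ∑ t, ⟪R t - xhat, ℓ t - ⟪x t, ℓ t⟫ • a⟫ := by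
  refine Finset.sum_congr rfl fun t _ => ?_
  rw [inner_sub_left, inner_sub_left, hforce t (ℓ t), inner_sub_right, inner_smul_right,
    hT xhat hxhat]
  ring
end

section
/- Let C = cone(T) for T a nonempty compact convex set contained in {x ∈ R^{n+1} : ⟨x, a⟩ = 1} with a = (1, 0, ..., 0), and let Ω = max_{x ∈ T} ‖x‖₂. Then for all R₁, R₂ ∈ C with ⟨R₁, a⟩ > 0 and ⟨R₂, a⟩ > 0: ‖R₁/⟨R₁,a⟩ − R₂/⟨R₂,a⟩‖₂ ≤ Ω · ‖R₁ − R₂‖₂ / max{⟨R₁,a⟩, ⟨R₂,a⟩}. -/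
open scoped RealInnerProductSpace

lemma key_ineq {n : ℕ} (a x d : EuclideanSpace ℝ (Fin (n + 1)))
    (hna : ‖a‖ = 1) (hxa : ⟪x, a⟫ = 1) :
    ‖d - ⟪d, a⟫ • x‖ ≤ ‖x‖ * ‖d‖ := by
  set δ : ℝ := ⟪d, a⟫ with hδ
  set p : ℝ := ⟪d, x⟫ with hp
  have haa : ⟪a, a⟫ = 1 := by
    rw [real_inner_self_eq_norm_sq, hna]; norm_num
  have hax : ⟪a, x⟫ = 1 := by rw [real_inner_comm]; exact hxa
  have had : ⟪a, d⟫ = δ := by rw [real_inner_comm]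
  have hxd : ⟪x, d⟫ = p := by rw [real_inner_comm]
  have hdd : ⟪d, d⟫ = ‖d‖ ^ 2 := real_inner_self_eq_norm_sq d
  have hxx : ⟪x, x⟫ = ‖x‖ ^ 2 := real_inner_self_eq_norm_sq x
  have hCS := real_inner_mul_inner_self_le (d - δ • a) (x - a)
  have e1 : ⟪d - δ • a, x - a⟫ = p - δ := by
    simp only [inner_sub_left, inner_sub_right, real_inner_smul_left]
    simp only [hax, haa, hxa, ← hp, ← hδ]; ring
  have e2 : ⟪d - δ • a, d - δ • a⟫ = ‖d‖ ^ 2 - δ ^ 2 := by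
    simp only [inner_sub_left, inner_sub_right, real_inner_smul_left, real_inner_smul_right]
    simp only [had, haa, hdd, hxa, hax, ← hδ]; ring
  have e3 : ⟪x - a, x - a⟫ = ‖x‖ ^ 2 - 1 := by
    simp only [inner_sub_left, inner_sub_right]
    simp only [hax, hxa, haa, hxx]; ring
  rw [e1, e2, e3] at hCS
  have e4 : ‖d - δ • x‖ ^ 2 = ‖d‖ ^ 2 - 2 * δ * p + δ ^ 2 * ‖x‖ ^ 2 := by
    rw [← real_inner_self_eq_norm_sq]
    simp only [inner_sub_left, inner_sub_right, real_inner_smul_left, real_inner_smul_right]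
    simp only [hdd, hxx, hxd, had, hxa, ← hp, ← hδ]; ring
  have hsq : ‖d - δ • x‖ ^ 2 ≤ (‖x‖ * ‖d‖) ^ 2 := by
    rw [e4]; nlinarith [sq_nonneg p, sq_nonneg (p - δ)]
  have h1 : 0 ≤ ‖x‖ * ‖d‖ := mul_nonneg (norm_nonneg _) (norm_nonneg _)
  nlinarith [norm_nonneg (d - δ • x)]

lemma aux_lemma {n : ℕ}
    (T : Set (EuclideanSpace ℝ (Fin (n + 1))))
    (a : EuclideanSpace ℝ (Fin (n + 1))) (hna : ‖a‖ = 1)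
    (hT : ∀ x ∈ T, ⟪x, a⟫ = 1)
    (Ω : ℝ) (hΩ : IsGreatest (norm '' T) Ω)
    (R₁ R₂ : EuclideanSpace ℝ (Fin (n + 1)))
    (h₂ : R₂ ∈ coneOf T)
    (hp₁ : 0 < ⟪R₁, a⟫) (hp₂ : 0 < ⟪R₂, a⟫) :
    ‖(⟪R₁, a⟫)⁻¹ • R₁ - (⟪R₂, a⟫)⁻¹ • R₂‖ ≤ Ω * ‖R₁ - R₂‖ / ⟪R₁, a⟫ := by
  obtain ⟨α, hα0, x, hxT, rfl⟩ := h₂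
  have hxa : ⟪x, a⟫ = 1 := hT x hxT
  have hR2a : ⟪(α • x : EuclideanSpace ℝ (Fin (n + 1))), a⟫ = α := by
    rw [real_inner_smul_left, hxa, mul_one]
  rw [hR2a] at hp₂ ⊢
  set α₁ : ℝ := ⟪R₁, a⟫ with hα₁
  have hα₁pos : 0 < α₁ := hp₁
  have hx2 : (α : ℝ)⁻¹ • (α • x) = x := by
    rw [smul_smul, inv_mul_cancel₀ (ne_of_gt hp₂), one_smul]
  rw [hx2]
  set d : EuclideanSpace ℝ (Fin (n + 1)) := R₁ - α • x with hd
  have hδ : ⟪d, a⟫ = α₁ - α := by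
    rw [hd, inner_sub_left, real_inner_smul_left, hxa, mul_one, ← hα₁]
  have hdecomp : α₁⁻¹ • R₁ - x = α₁⁻¹ • (d - ⟪d, a⟫ • x) := by
    rw [hδ, hd, smul_sub, smul_sub, smul_smul, smul_smul]
    have hc : α₁⁻¹ * α + α₁⁻¹ * (α₁ - α) = 1 := by field_simp; ring
    rw [sub_sub, ← add_smul, hc, one_smul]
  rw [hdecomp, norm_smul]
  have hkey := key_ineq a x d hna hxa
  have hxΩ : ‖x‖ ≤ Ω := hΩ.2 ⟨x, hxT, rfl⟩
  have hΩ0 : 0 ≤ Ω := le_trans (norm_nonneg x) hxΩ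
  have : ‖d - ⟪d, a⟫ • x‖ ≤ Ω * ‖d‖ :=
    hkey.trans (mul_le_mul_of_nonneg_right hxΩ (norm_nonneg d))
  have hnα₁ : ‖(α₁ : ℝ)⁻¹‖ = α₁⁻¹ := by
    rw [Real.norm_eq_abs, abs_of_pos (inv_pos.mpr hα₁pos)]
  rw [hnα₁, div_eq_inv_mul]
  exact mul_le_mul_of_nonneg_left this (le_of_lt (inv_pos.mpr hα₁pos))

/-- Lipschitz-type estimate for the normalization map `R ↦ R / ⟨R, a⟩` on `cone(T)`. -/
theorem normalization_lipschitz_on_cone {n : ℕ}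
    (T : Set (EuclideanSpace ℝ (Fin (n + 1))))
    (hne : T.Nonempty) (hcomp : IsCompact T) (hconv : Convex ℝ T)
    (a : EuclideanSpace ℝ (Fin (n + 1))) (ha : a = EuclideanSpace.single 0 1)
    (hT : ∀ x ∈ T, ⟪x, a⟫ = 1)
    (Ω : ℝ) (hΩ : IsGreatest (norm '' T) Ω)
    (R₁ R₂ : EuclideanSpace ℝ (Fin (n + 1)))
    (h₁ : R₁ ∈ coneOf T) (h₂ : R₂ ∈ coneOf T)
    (hp₁ : 0 < ⟪R₁, a⟫) (hp₂ : 0 < ⟪R₂, a⟫) :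
    ‖(⟪R₁, a⟫)⁻¹ • R₁ - (⟪R₂, a⟫)⁻¹ • R₂‖ ≤ Ω * ‖R₁ - R₂‖ / max ⟪R₁, a⟫ ⟪R₂, a⟫ := by
  have hna : ‖a‖ = 1 := by
    rw [ha, EuclideanSpace.norm_single, norm_one]
  rcases le_total ⟪R₂, a⟫ ⟪R₁, a⟫ with h | h
  · rw [max_eq_left h]
    exact aux_lemma T a hna hT Ω hΩ R₁ R₂ h₂ hp₁ hp₂
  · rw [max_eq_right h, norm_sub_rev, norm_sub_rev R₁ R₂]
    exact aux_lemma T a hna hT Ω hΩ R₂ R₁ h₁ hp₂ hp₁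
end

section
/- Let C = cone(T) with T convex and contained in {x : ⟨x, a⟩ = 1}, a = (1, 0, ..., 0), Ω = max_{x∈T} ‖x‖₂, and let R₀ > 0. Define the stable region C_≥ := C ∩ {R : ⟨R, a⟩ ≥ R₀}. Then for all R₁, R₂ ∈ C_≥: ‖R₁/⟨R₁,a⟩ − R₂/⟨R₂,a⟩‖₂ ≤ (Ω/R₀)·‖R₁ − R₂‖₂, i.e., the normalization map R ↦ R/⟨R,a⟩ is (Ω/R₀)-Lipschitz on C_≥. -/
open scoped RealInnerProductSpace

lemma key_normalization_lemma {E : Type*} [NormedAddCommGroup E] [InnerProductSpace ℝ E]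
    (a y₁ y₂ : E) (ha : ‖a‖ = 1) (h1 : ⟪y₁, a⟫ = 1) (h2 : ⟪y₂, a⟫ = 1)
    (Ω R₀ t₁ t₂ : ℝ) (hy2 : ‖y₂‖ ≤ Ω) (hR₀ : 0 < R₀) (ht₁ : R₀ ≤ t₁) :
    ‖y₁ - y₂‖ ≤ (Ω / R₀) * ‖t₁ • y₁ - t₂ • y₂‖ := by
  set D := t₁ • y₁ - t₂ • y₂ with hD
  set δ := t₁ - t₂ with hδ
  set z := y₂ - a with hz
  have haa : ⟪a, a⟫ = 1 := by
    rw [real_inner_self_eq_norm_mul_norm, ha]; ring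
  have hDa : ⟪D, a⟫ = δ := by
    simp [hD, hδ, inner_sub_left, inner_smul_left, h1, h2]
  have hza : ⟪z, a⟫ = 0 := by
    simp [hz, inner_sub_left, h2, haa, ha]
  have horth : ⟪D - δ • a, a⟫ = 0 := by
    simp [inner_sub_left, inner_smul_left, hDa, haa, ha]
  have hpyth : ‖D‖ ^ 2 = ‖D - δ • a‖ ^ 2 + δ ^ 2 := by
    have hsplit : D = (D - δ • a) + δ • a := by abel
    have hinner : ⟪D - δ • a, δ • a⟫ = 0 := by
      rw [inner_smul_right, horth]; ring
    calc ‖D‖ ^ 2 = ‖(D - δ • a) + δ • a‖ ^ 2 := by rw [← hsplit]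
      _ = ‖D - δ • a‖ ^ 2 + 2 * ⟪D - δ • a, δ • a⟫ + ‖δ • a‖ ^ 2 := by
          rw [@norm_add_sq_real]
      _ = ‖D - δ • a‖ ^ 2 + δ ^ 2 := by
          rw [hinner, norm_smul, ha, Real.norm_eq_abs]
          rw [mul_one, sq_abs]; ring
  have hy2sq : ‖y₂‖ ^ 2 = 1 + ‖z‖ ^ 2 := by
    have hsplit : y₂ = a + z := by simp [hz]
    have hinner : ⟪a, z⟫ = 0 := by rw [real_inner_comm]; exact hza
    calc ‖y₂‖ ^ 2 = ‖a + z‖ ^ 2 := by rw [← hsplit]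
      _ = ‖a‖ ^ 2 + 2 * ⟪a, z⟫ + ‖z‖ ^ 2 := by rw [@norm_add_sq_real]
      _ = 1 + ‖z‖ ^ 2 := by rw [hinner, ha]; ring
  have hident : t₁ • (y₁ - y₂) = (D - δ • a) - δ • z := by
    simp only [hD, hδ, hz, smul_sub, sub_smul]
    abel
  have htri : t₁ * ‖y₁ - y₂‖ ≤ ‖D - δ • a‖ + |δ| * ‖z‖ := by
    have h1' : ‖t₁ • (y₁ - y₂)‖ = t₁ * ‖y₁ - y₂‖ := by
      rw [norm_smul, Real.norm_eq_abs, abs_of_pos (lt_of_lt_of_le hR₀ ht₁)]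
    calc t₁ * ‖y₁ - y₂‖ = ‖(D - δ • a) - δ • z‖ := by rw [← h1', hident]
      _ ≤ ‖D - δ • a‖ + ‖δ • z‖ := norm_sub_le _ _
      _ = ‖D - δ • a‖ + |δ| * ‖z‖ := by rw [norm_smul, Real.norm_eq_abs]
  -- now pure arithmetic
  have hΩ0 : 0 ≤ Ω := le_trans (norm_nonneg _) hy2
  have hDnn : 0 ≤ ‖D‖ := norm_nonneg _
  have hPnn : 0 ≤ ‖D - δ • a‖ := norm_nonneg _
  have hznn : 0 ≤ ‖z‖ := norm_nonneg _
  have hcs : (‖D - δ • a‖ + |δ| * ‖z‖) ^ 2 ≤ ‖D‖ ^ 2 * ‖y₂‖ ^ 2 := by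
    rw [hpyth, hy2sq]
    nlinarith [sq_nonneg (‖D - δ • a‖ * ‖z‖ - |δ|), abs_nonneg δ, sq_abs δ]
  have ht₁pos : 0 < t₁ := lt_of_lt_of_le hR₀ ht₁
  have hLnn : 0 ≤ t₁ * ‖y₁ - y₂‖ := mul_nonneg ht₁pos.le (norm_nonneg _)
  have hmain : t₁ * ‖y₁ - y₂‖ ≤ Ω * ‖D‖ := by
    have hy2Ω : ‖y₂‖ ^ 2 ≤ Ω ^ 2 := by nlinarith [norm_nonneg y₂]
    have step1 : (t₁ * ‖y₁ - y₂‖) ^ 2 ≤ (‖D - δ • a‖ + |δ| * ‖z‖) ^ 2 :=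
      pow_le_pow_left₀ hLnn htri 2
    have step2 : ‖D‖ ^ 2 * ‖y₂‖ ^ 2 ≤ ‖D‖ ^ 2 * Ω ^ 2 :=
      mul_le_mul_of_nonneg_left hy2Ω (sq_nonneg _)
    have h2' : (t₁ * ‖y₁ - y₂‖) ^ 2 ≤ (Ω * ‖D‖) ^ 2 := by
      calc (t₁ * ‖y₁ - y₂‖) ^ 2 ≤ (‖D - δ • a‖ + |δ| * ‖z‖) ^ 2 := step1
        _ ≤ ‖D‖ ^ 2 * ‖y₂‖ ^ 2 := hcs
        _ ≤ ‖D‖ ^ 2 * Ω ^ 2 := step2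
        _ = (Ω * ‖D‖) ^ 2 := by ring
    have hΩD : 0 ≤ Ω * ‖D‖ := mul_nonneg hΩ0 hDnn
    exact (pow_le_pow_iff_left₀ hLnn hΩD two_ne_zero).mp h2'
  rw [div_mul_eq_mul_div, le_div_iff₀ hR₀]
  calc ‖y₁ - y₂‖ * R₀ ≤ ‖y₁ - y₂‖ * t₁ := by
        apply mul_le_mul_of_nonneg_left ht₁ (norm_nonneg _)
    _ = t₁ * ‖y₁ - y₂‖ := by ring
    _ ≤ Ω * ‖D‖ := hmain

/-- On the stable region `C_≥ = cone(T) ∩ {R : ⟨R, a⟩ ≥ R₀}`, the normalization map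
`R ↦ R / ⟨R, a⟩` is `(Ω / R₀)`-Lipschitz. -/
theorem normalization_lipschitz_on_stable_region {n : ℕ}
    (T : Set (EuclideanSpace ℝ (Fin (n + 1))))
    (hne : T.Nonempty) (hcomp : IsCompact T) (hconv : Convex ℝ T)
    (a : EuclideanSpace ℝ (Fin (n + 1))) (ha : a = EuclideanSpace.single 0 1)
    (hT : ∀ x ∈ T, ⟪x, a⟫ = 1)
    (Ω : ℝ) (hΩ : IsGreatest (norm '' T) Ω)
    (R₀ : ℝ) (hR₀ : 0 < R₀)
    (R₁ R₂ : EuclideanSpace ℝ (Fin (n + 1)))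
    (h₁ : R₁ ∈ coneOf T ∩ {R | R₀ ≤ ⟪R, a⟫})
    (h₂ : R₂ ∈ coneOf T ∩ {R | R₀ ≤ ⟪R, a⟫}) :
    ‖(⟪R₁, a⟫)⁻¹ • R₁ - (⟪R₂, a⟫)⁻¹ • R₂‖ ≤ (Ω / R₀) * ‖R₁ - R₂‖ := by
  have hanorm : ‖a‖ = 1 := by
    rw [ha, EuclideanSpace.norm_single]; norm_num
  -- extract normalized points
  have extract : ∀ R : EuclideanSpace ℝ (Fin (n + 1)),
      R ∈ coneOf T ∩ {R | R₀ ≤ ⟪R, a⟫} →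
      ∃ y ∈ T, ⟪R, a⟫ = ⟪R, a⟫ ∧ (⟪R, a⟫)⁻¹ • R = y ∧ R = ⟪R, a⟫ • y := by
    intro R hR
    obtain ⟨⟨α, hα0, x, hx, hRx⟩, hRa⟩ := hR
    have hRa' : ⟪R, a⟫ = α := by
      rw [hRx, real_inner_smul_left, hT x hx, mul_one]
    have hαpos : 0 < α := by
      rw [← hRa']; exact lt_of_lt_of_le hR₀ hRa
    refine ⟨x, hx, rfl, ?_, ?_⟩
    · rw [hRa', hRx, smul_smul, inv_mul_cancel₀ (ne_of_gt hαpos), one_smul]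
    · rw [hRa', hRx]
  obtain ⟨y₁, hy₁T, -, hy₁, hR₁⟩ := extract R₁ h₁
  obtain ⟨y₂, hy₂T, -, hy₂, hR₂⟩ := extract R₂ h₂
  rw [hy₁, hy₂]
  have hR₁' : R₁ = ⟪R₁, a⟫ • y₁ := hR₁
  have hR₂' : R₂ = ⟪R₂, a⟫ • y₂ := hR₂
  have key := key_normalization_lemma a y₁ y₂ hanorm (hT y₁ hy₁T) (hT y₂ hy₂T)
    Ω R₀ (⟪R₁, a⟫) (⟪R₂, a⟫) (hΩ.2 ⟨y₂, hy₂T, rfl⟩) hR₀ h₁.2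
  calc ‖y₁ - y₂‖ ≤ (Ω / R₀) * ‖⟪R₁, a⟫ • y₁ - ⟪R₂, a⟫ • y₂‖ := key
    _ = (Ω / R₀) * ‖R₁ - R₂‖ := by rw [← hR₁', ← hR₂']
end

section
/- Let T ⊂ R^{n+1} be nonempty, convex, compact, contained in {x : ⟨x, a⟩ = 1}, with Ω := max_{x ∈ T} ‖x‖₂. Suppose strategies x_1, ..., x_T ∈ T are produced by running online mirror descent (without predictions) on C = cone(T): R_1 = 0, x_t = R_t/⟨R_t, a⟩ (with x_t arbitrary in T if R_t = 0), and R_{t+1} = Π_C(R_t − η f(x_t, ℓ_t)) where f(x, ℓ) = ℓ − ⟨x,ℓ⟩a. If each update additionally satisfies the standard OMD regret bound ∑_t ⟨R_t − R̂, f(x_t,ℓ_t)⟩ ≤ ‖R̂‖₂²/(2η) + (η/2)∑_t ‖f(x_t,ℓ_t)‖₂² for all R̂ ∈ C, then the treeplex regret satisfies max_{x̂∈T} ∑_{t=1}^T ⟨x_t − x̂, ℓ_t⟩ ≤ Ω²/(2η) + (η/2)∑_{t=1}^T ‖f(x_t, ℓ_t)‖₂². -/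
open scoped RealInnerProductSpace

/-- `p` is the Euclidean orthogonal projection of `y` onto `C`. -/
def IsEuclidProj {E : Type*} [NormedAddCommGroup E] (C : Set E) (y p : E) : Prop :=
  p ∈ C ∧ ∀ z ∈ C, ‖p - y‖ ≤ ‖z - y‖

/-- Regret bound on the treeplex for online mirror descent run on `cone(T)`:
given the standard OMD regret bound over the cone, the regret over `T` is bounded
by `Ω²/(2η) + (η/2) ∑ ‖f(x_t, ℓ_t)‖²`. -/
theorem treeplex_regret_bound_from_cone_omd {n : ℕ}
    (T : Set (EuclideanSpace ℝ (Fin (n + 1))))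
    (hne : T.Nonempty) (hcomp : IsCompact T) (hconv : Convex ℝ T)
    (a : EuclideanSpace ℝ (Fin (n + 1)))
    (hT : ∀ x ∈ T, ⟪x, a⟫ = 1)
    (Ω : ℝ) (hΩ : IsGreatest (norm '' T) Ω)
    (N : ℕ) (η : ℝ) (hη : 0 < η)
    (x R ℓ : ℕ → EuclideanSpace ℝ (Fin (n + 1)))
    (hx : ∀ t, x t ∈ T) (hRc : ∀ t, R t ∈ coneOf T)
    (hR0 : R 0 = 0)
    (hxt : ∀ t, R t = 0 ∨ x t = (⟪R t, a⟫)⁻¹ • R t)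
    (hupd : ∀ t, IsEuclidProj (coneOf T)
      (R t - η • (ℓ t - ⟪x t, ℓ t⟫ • a)) (R (t + 1)))
    (hbound : ∀ Rhat ∈ coneOf T,
      ∑ t ∈ Finset.range N, ⟪R t - Rhat, ℓ t - ⟪x t, ℓ t⟫ • a⟫ ≤
        ‖Rhat‖ ^ 2 / (2 * η) +
          (η / 2) * ∑ t ∈ Finset.range N, ‖ℓ t - ⟪x t, ℓ t⟫ • a‖ ^ 2) :
    ∀ xhat ∈ T,
      ∑ t ∈ Finset.range N, ⟪x t - xhat, ℓ t⟫ ≤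
        Ω ^ 2 / (2 * η) +
          (η / 2) * ∑ t ∈ Finset.range N, ‖ℓ t - ⟪x t, ℓ t⟫ • a‖ ^ 2 := by
  intro xhat hxhat
  have hRf : ∀ t, ⟪R t, ℓ t - ⟪x t, ℓ t⟫ • a⟫ = 0 := by
    intro t
    rcases hxt t with h | h
    · simp [h]
    · obtain ⟨α, hα, x', hx', hR⟩ := hRc t
      rcases eq_or_lt_of_le hα with hα0 | hα0
      · simp [hR, ← hα0]
      · have hxa : ⟪x', a⟫ = 1 := hT x' hx'
        have hRa : ⟪R t, a⟫ = α := by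
          rw [hR, real_inner_smul_left, hxa, mul_one]
        rw [inner_sub_right, real_inner_smul_right, hRa, h,
          real_inner_smul_left, hRa]
        field_simp
        ring
  have key : ∀ t, ⟪x t - xhat, ℓ t⟫ = ⟪R t - xhat, ℓ t - ⟪x t, ℓ t⟫ • a⟫ := by
    intro t
    have hxa : ⟪xhat, a⟫ = 1 := hT xhat hxhat
    rw [inner_sub_left, inner_sub_left, hRf t, inner_sub_right,
      real_inner_smul_right, hxa]
    ring
  have hmem : xhat ∈ coneOf T := ⟨1, zero_le_one, xhat, hxhat, (one_smul ℝ xhat).symm⟩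
  have hb := hbound xhat hmem
  have hxn : ‖xhat‖ ≤ Ω := hΩ.2 ⟨xhat, hxhat, rfl⟩
  have hx2 : ‖xhat‖ ^ 2 ≤ Ω ^ 2 := by
    have := norm_nonneg xhat
    nlinarith
  calc ∑ t ∈ Finset.range N, ⟪x t - xhat, ℓ t⟫
      = ∑ t ∈ Finset.range N, ⟪R t - xhat, ℓ t - ⟪x t, ℓ t⟫ • a⟫ := by
        exact Finset.sum_congr rfl fun t _ => key t
    _ ≤ ‖xhat‖ ^ 2 / (2 * η) +
          (η / 2) * ∑ t ∈ Finset.range N, ‖ℓ t - ⟪x t, ℓ t⟫ • a‖ ^ 2 := hb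
    _ ≤ Ω ^ 2 / (2 * η) +
          (η / 2) * ∑ t ∈ Finset.range N, ‖ℓ t - ⟪x t, ℓ t⟫ • a‖ ^ 2 := by
        gcongr
end

section
/- Let X, Y be nonempty compact convex sets, M a matrix of appropriate dimensions, and suppose both players in self-play satisfy RVU-type regret bounds: Reg₁ ≤ α + β∑_{t=1}^T ‖M(y_t − y_{t-1})‖² − γ∑_{t=1}^T ‖x_t − x_{t-1}‖² and Reg₂ ≤ α + β∑_{t=1}^T ‖Mᵀ(x_t − x_{t-1})‖² − γ∑_{t=1}^T ‖y_t − y_{t-1}‖², where ‖Mv‖ ≤ L‖v‖ and ‖Mᵀu‖ ≤ L‖u‖ for all u, v. If βL² ≤ γ, then Reg₁ + Reg₂ ≤ 2α, and hence the duality gap of the average iterates (x̄_T, ȳ_T) is at most 2α/T. -/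
open scoped RealInnerProductSpace

/-- If both players' regrets satisfy RVU bounds with constants `α, β, γ` and the
operator norms of `M, Mᵀ` are at most `L` with `β L² ≤ γ`, then the sum of regrets
is at most `2α`, and the duality gap of the average iterates is at most `2α/T`. -/
theorem rvu_implies_fast_rate {n₁ n₂ : ℕ}
    (X : Set (EuclideanSpace ℝ (Fin n₁))) (Y : Set (EuclideanSpace ℝ (Fin n₂)))
    (hXne : X.Nonempty) (hXcomp : IsCompact X) (hXconv : Convex ℝ X)
    (hYne : Y.Nonempty) (hYcomp : IsCompact Y) (hYconv : Convex ℝ Y)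
    (M : EuclideanSpace ℝ (Fin n₂) →ₗ[ℝ] EuclideanSpace ℝ (Fin n₁))
    (Mt : EuclideanSpace ℝ (Fin n₁) →ₗ[ℝ] EuclideanSpace ℝ (Fin n₂))
    (hadj : ∀ (u : EuclideanSpace ℝ (Fin n₁)) (v : EuclideanSpace ℝ (Fin n₂)),
      ⟪u, M v⟫ = ⟪Mt u, v⟫)
    (L : ℝ) (hL : 0 ≤ L)
    (hML : ∀ v, ‖M v‖ ≤ L * ‖v‖) (hMtL : ∀ u, ‖Mt u‖ ≤ L * ‖u‖)
    (T : ℕ) (hT : 0 < T)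
    (x : ℕ → EuclideanSpace ℝ (Fin n₁)) (y : ℕ → EuclideanSpace ℝ (Fin n₂))
    (hx : ∀ t, x t ∈ X) (hy : ∀ t, y t ∈ Y)
    (hx0 : x 0 = x 1) (hy0 : y 0 = y 1)
    (α β γ : ℝ) (hβ : 0 ≤ β) (hγ : 0 ≤ γ) (hβγ : β * L ^ 2 ≤ γ)
    (Reg₁ Reg₂ : ℝ)
    (hReg₁ : IsGreatest
      {r | ∃ xhat ∈ X, r = ∑ t ∈ Finset.Icc 1 T, ⟪x t - xhat, M (y t)⟫} Reg₁)
    (hReg₂ : IsGreatest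
      {r | ∃ yhat ∈ Y, r = ∑ t ∈ Finset.Icc 1 T, ⟪y t - yhat, -(Mt (x t))⟫} Reg₂)
    (hRVU₁ : Reg₁ ≤ α + β * ∑ t ∈ Finset.Icc 1 T, ‖M (y t - y (t - 1))‖ ^ 2
      - γ * ∑ t ∈ Finset.Icc 1 T, ‖x t - x (t - 1)‖ ^ 2)
    (hRVU₂ : Reg₂ ≤ α + β * ∑ t ∈ Finset.Icc 1 T, ‖Mt (x t - x (t - 1))‖ ^ 2
      - γ * ∑ t ∈ Finset.Icc 1 T, ‖y t - y (t - 1)‖ ^ 2)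
    (xbar : EuclideanSpace ℝ (Fin n₁)) (hxbar : xbar = (T : ℝ)⁻¹ • ∑ t ∈ Finset.Icc 1 T, x t)
    (ybar : EuclideanSpace ℝ (Fin n₂)) (hybar : ybar = (T : ℝ)⁻¹ • ∑ t ∈ Finset.Icc 1 T, y t)
    (gmax gmin : ℝ)
    (hgmax : IsGreatest {r | ∃ yhat ∈ Y, r = ⟪xbar, M yhat⟫} gmax)
    (hgmin : IsLeast {r | ∃ xhat ∈ X, r = ⟪xhat, M ybar⟫} gmin) :
    Reg₁ + Reg₂ ≤ 2 * α ∧ gmax - gmin ≤ 2 * α / T := by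
  have hsum : Reg₁ + Reg₂ ≤ 2 * α := by
    have hA : β * ∑ t ∈ Finset.Icc 1 T, ‖M (y t - y (t - 1))‖ ^ 2
        ≤ γ * ∑ t ∈ Finset.Icc 1 T, ‖y t - y (t - 1)‖ ^ 2 := by
      have h1 : ∑ t ∈ Finset.Icc 1 T, ‖M (y t - y (t - 1))‖ ^ 2
          ≤ ∑ t ∈ Finset.Icc 1 T, L ^ 2 * ‖y t - y (t - 1)‖ ^ 2 := by
        apply Finset.sum_le_sum
        intro t _
        have := hML (y t - y (t - 1))
        nlinarith [norm_nonneg (M (y t - y (t - 1))), norm_nonneg (y t - y (t - 1))]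
      rw [← Finset.mul_sum] at h1
      have hS : (0:ℝ) ≤ ∑ t ∈ Finset.Icc 1 T, ‖y t - y (t - 1)‖ ^ 2 :=
        Finset.sum_nonneg fun t _ => sq_nonneg _
      nlinarith [mul_le_mul_of_nonneg_left h1 hβ]
    have hB : β * ∑ t ∈ Finset.Icc 1 T, ‖Mt (x t - x (t - 1))‖ ^ 2
        ≤ γ * ∑ t ∈ Finset.Icc 1 T, ‖x t - x (t - 1)‖ ^ 2 := by
      have h1 : ∑ t ∈ Finset.Icc 1 T, ‖Mt (x t - x (t - 1))‖ ^ 2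
          ≤ ∑ t ∈ Finset.Icc 1 T, L ^ 2 * ‖x t - x (t - 1)‖ ^ 2 := by
        apply Finset.sum_le_sum
        intro t _
        have := hMtL (x t - x (t - 1))
        nlinarith [norm_nonneg (Mt (x t - x (t - 1))), norm_nonneg (x t - x (t - 1))]
      rw [← Finset.mul_sum] at h1
      have hS : (0:ℝ) ≤ ∑ t ∈ Finset.Icc 1 T, ‖x t - x (t - 1)‖ ^ 2 :=
        Finset.sum_nonneg fun t _ => sq_nonneg _
      nlinarith [mul_le_mul_of_nonneg_left h1 hβ]
    linarith
  refine ⟨hsum, ?_⟩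
  obtain ⟨yh, hyhY, hyh⟩ := hgmax.1
  obtain ⟨xh, hxhX, hxh⟩ := hgmin.1
  have key : ∀ t, ⟪x t - xh, M (y t)⟫ + ⟪y t - yh, -(Mt (x t))⟫
      = ⟪x t, M yh⟫ - ⟪xh, M (y t)⟫ := by
    intro t
    have h1 : ⟪x t, M (y t)⟫ = ⟪y t, Mt (x t)⟫ := by
      rw [hadj, real_inner_comm]
    have h2 : ⟪x t, M yh⟫ = ⟪yh, Mt (x t)⟫ := by
      rw [hadj, real_inner_comm]
    simp only [inner_sub_left, inner_neg_right]
    linarith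
  have hsum1 : (∑ t ∈ Finset.Icc 1 T, ⟪x t - xh, M (y t)⟫)
      + (∑ t ∈ Finset.Icc 1 T, ⟪y t - yh, -(Mt (x t))⟫)
      = (∑ t ∈ Finset.Icc 1 T, ⟪x t, M yh⟫)
      - (∑ t ∈ Finset.Icc 1 T, ⟪xh, M (y t)⟫) := by
    rw [← Finset.sum_add_distrib, ← Finset.sum_sub_distrib]
    exact Finset.sum_congr rfl fun t _ => key t
  have hgmax' : gmax = (T : ℝ)⁻¹ * ∑ t ∈ Finset.Icc 1 T, ⟪x t, M yh⟫ := by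
    rw [hyh, hxbar, real_inner_smul_left, sum_inner]
  have hgmin' : gmin = (T : ℝ)⁻¹ * ∑ t ∈ Finset.Icc 1 T, ⟪xh, M (y t)⟫ := by
    rw [hxh, hybar, map_smul, real_inner_smul_right, map_sum, inner_sum]
  have hR1 : (∑ t ∈ Finset.Icc 1 T, ⟪x t - xh, M (y t)⟫) ≤ Reg₁ :=
    hReg₁.2 ⟨xh, hxhX, rfl⟩
  have hR2 : (∑ t ∈ Finset.Icc 1 T, ⟪y t - yh, -(Mt (x t))⟫) ≤ Reg₂ :=
    hReg₂.2 ⟨yh, hyhY, rfl⟩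
  have hTpos : (0:ℝ) < T := Nat.cast_pos.mpr hT
  rw [hgmax', hgmin', div_eq_inv_mul, ← mul_sub]
  have : (∑ t ∈ Finset.Icc 1 T, ⟪x t, M yh⟫) - (∑ t ∈ Finset.Icc 1 T, ⟪xh, M (y t)⟫)
      ≤ 2 * α := by rw [← hsum1]; linarith
  exact mul_le_mul_of_nonneg_left this (inv_nonneg.mpr hTpos.le)
end
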